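/- arXiv:1907.10145 — 3 statements merged into one kernel-verified Lean document; each statement's English description precedes it below -/
import Mathlib

section
/- For 0 < r₁ ≤ r₂ < 1, the annuli A_{r₁} = {z ∈ ℂ : r₁ < |z| < 1} and A_{r₂} = {z ∈ ℂ : r₂ < |z| < 1} are biholomorphic (conformally equivalent) if and only if r₁ = r₂. -/
open Complex

/-- The annulus `{z : ℂ | r < |z| < 1}`. -/
def annulus (r : ℝ) : Set ℂ := {z : ℂ | r < ‖z‖ ∧ ‖z‖ < 1}

/-- Two open subsets of `ℂ` are conformally equivalent if there is a bijective holomorphic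
map between them with holomorphic inverse. -/
def ConformalEquivOn (U V : Set ℂ) : Prop :=
  ∃ f g : ℂ → ℂ, DifferentiableOn ℂ f U ∧ DifferentiableOn ℂ g V ∧
    Set.MapsTo f U V ∧ Set.MapsTo g V U ∧ Set.InvOn g f U V

section AnnuliHelpers

open Set Metric Filter

lemma isConnected_annular {a b : ℝ} (ha : 0 ≤ a) (hab : a < b) :
    IsConnected {z : ℂ | a < ‖z‖ ∧ ‖z‖ < b} := by
  have himg : {z : ℂ | a < ‖z‖ ∧ ‖z‖ < b} =
      (fun p : ℝ × ℝ => (p.1 : ℂ) * Complex.exp (p.2 * Complex.I)) ''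
        (Set.Ioo a b ×ˢ (Set.univ : Set ℝ)) := by
    ext z
    constructor
    · rintro ⟨h1, h2⟩
      exact ⟨(‖z‖, Complex.arg z), ⟨⟨h1, h2⟩, trivial⟩, Complex.norm_mul_exp_arg_mul_I z⟩
    · rintro ⟨⟨t, θ⟩, ⟨⟨ht1, ht2⟩, -⟩, rfl⟩
      have ht0 : 0 < t := lt_of_le_of_lt ha ht1
      have : ‖(t : ℂ) * Complex.exp ((θ:ℝ) * Complex.I)‖ = t := by
        rw [norm_mul, Complex.norm_exp_ofReal_mul_I, Complex.norm_real, Real.norm_eq_abs, mul_one, abs_of_pos ht0]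
      exact ⟨by rw [this]; exact ht1, by rw [this]; exact ht2⟩
  rw [himg]
  refine ((isConnected_Ioo hab).prod isConnected_univ).image _ (Continuous.continuousOn ?_)
  continuity

lemma isConnected_annular_slit {a b : ℝ} (ha : 0 ≤ a) (hab : a < b) :
    IsConnected {z : ℂ | (a < ‖z‖ ∧ ‖z‖ < b) ∧ z ∈ Complex.slitPlane} := by
  have himg : {z : ℂ | (a < ‖z‖ ∧ ‖z‖ < b) ∧ z ∈ Complex.slitPlane} =
      (fun p : ℝ × ℝ => (p.1 : ℂ) * Complex.exp (p.2 * Complex.I)) ''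
        (Set.Ioo a b ×ˢ (Set.Ioo (-Real.pi) Real.pi)) := by
    ext z
    constructor
    · rintro ⟨⟨h1, h2⟩, hslit⟩
      refine ⟨(‖z‖, Complex.arg z), ⟨⟨h1, h2⟩, ⟨Complex.neg_pi_lt_arg z, ?_⟩⟩,
        Complex.norm_mul_exp_arg_mul_I z⟩
      exact lt_of_le_of_ne (Complex.arg_le_pi z) (Complex.slitPlane_arg_ne_pi hslit)
    · rintro ⟨⟨t, θ⟩, ⟨⟨ht1, ht2⟩, ⟨hθ1, hθ2⟩⟩, rfl⟩
      have ht0 : 0 < t := lt_of_le_of_lt ha ht1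
      have habs : ‖(t : ℂ) * Complex.exp ((θ:ℝ) * Complex.I)‖ = t := by
        rw [norm_mul, Complex.norm_exp_ofReal_mul_I, Complex.norm_real, Real.norm_eq_abs, mul_one, abs_of_pos ht0]
      refine ⟨⟨by rw [habs]; exact ht1, by rw [habs]; exact ht2⟩, ?_⟩
      rcases eq_or_ne θ 0 with h0 | h0
      · subst h0
        left
        simp [Complex.exp_zero, ht0]
      · right
        have : ((t : ℂ) * Complex.exp ((θ:ℝ) * Complex.I)).im = t * Real.sin θ := by
          rw [Complex.exp_mul_I]
          simp [Complex.mul_im, Complex.cos_ofReal_re, Complex.sin_ofReal_re]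
        rw [this]
        rcases lt_or_gt_of_ne h0 with hneg | hpos
        · have : Real.sin θ < 0 := by
            have := Real.sin_pos_of_pos_of_lt_pi (x := -θ) (by linarith) (by linarith)
            rw [Real.sin_neg] at this; linarith
          exact ne_of_lt (by nlinarith)
        · have : 0 < Real.sin θ := Real.sin_pos_of_pos_of_lt_pi hpos hθ2
          exact ne_of_gt (by nlinarith)
  rw [himg]
  refine ((isConnected_Ioo hab).prod (isConnected_Ioo (by linarith [Real.pi_pos] : -Real.pi < Real.pi))).image
    _ (Continuous.continuousOn ?_)
  continuity

lemma compact_band {r : ℝ} (hr1 : r < 1) {C : Set ℂ} (hC : IsCompact C) (hsub : C ⊆ annulus r) :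
    ∃ δ > 0, ∀ z ∈ C, r + δ ≤ ‖z‖ ∧ ‖z‖ ≤ 1 - δ := by
  rcases C.eq_empty_or_nonempty with rfl | hne
  · exact ⟨(1 - r)/2, by linarith, fun z hz => absurd hz (notMem_empty z)⟩
  · have hcont : ContinuousOn (fun z : ℂ => min (‖z‖ - r) (1 - ‖z‖)) C := by
      exact ((continuous_norm.sub continuous_const).min
        (continuous_const.sub continuous_norm)).continuousOn
    obtain ⟨x, hxC, hx⟩ := hC.exists_isMinOn hne hcont
    have hxA := hsub hxC
    refine ⟨min (‖x‖ - r) (1 - ‖x‖), by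
      simp only [lt_min_iff]; exact ⟨by linarith [hxA.1], by linarith [hxA.2]⟩, fun z hz => ?_⟩
    have := hx hz
    simp only [min_le_iff] at this ⊢
    constructor
    · have h1 : min (‖x‖ - r) (1 - ‖x‖) ≤ ‖z‖ - r :=
        le_trans (hx hz) (min_le_left _ _)
      linarith
    · have h2 : min (‖x‖ - r) (1 - ‖x‖) ≤ 1 - ‖z‖ :=
        le_trans (hx hz) (min_le_right _ _)
      linarith

lemma proper_aux {r s : ℝ} (hr1 : r < 1) {f g : ℂ → ℂ}
    (hg : ContinuousOn g (annulus s))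
    (hgm : Set.MapsTo g (annulus s) (annulus r))
    (hinv : ∀ z ∈ annulus r, g (f z) = z) :
    ∀ ε > 0, ∃ δ > 0, ∀ z ∈ annulus r, (1 - δ < ‖z‖ ∨ ‖z‖ < r + δ) →
      (‖f z‖ < s + ε ∨ 1 - ε < ‖f z‖) := by
  intro ε hε
  set K : Set ℂ := Metric.closedBall 0 (1 - ε) \ Metric.ball 0 (s + ε) with hK
  have hKc : IsCompact K := (isCompact_closedBall _ _).diff isOpen_ball
  have hKmem : ∀ w : ℂ, w ∈ K ↔ (s + ε ≤ ‖w‖ ∧ ‖w‖ ≤ 1 - ε) := by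
    intro w
    simp only [hK, mem_diff, mem_closedBall, mem_ball, Complex.dist_eq, sub_zero, not_lt]
    tauto
  have hKsub : K ⊆ annulus s := by
    intro w hw
    rw [hKmem] at hw
    exact ⟨by linarith [hw.1], by linarith [hw.2]⟩
  have hgK : IsCompact (g '' K) := hKc.image_of_continuousOn (hg.mono hKsub)
  have hgKsub : g '' K ⊆ annulus r := by
    rintro - ⟨w, hw, rfl⟩
    exact hgm (hKsub hw)
  obtain ⟨δ, hδpos, hband⟩ := compact_band hr1 hgK hgKsub
  refine ⟨δ, hδpos, fun z hz hend => ?_⟩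
  by_contra hcon
  push_neg at hcon
  have hfK : f z ∈ K := (hKmem _).2 ⟨hcon.1, by linarith [hcon.2]⟩
  have hzg : z ∈ g '' K := ⟨f z, hfK, hinv z hz⟩
  obtain ⟨hb1, hb2⟩ := hband z hzg
  rcases hend with h | h
  · linarith
  · linarith

lemma absmax_annulus {r : ℝ} (hr0 : 0 < r) {G : ℂ → ℂ}
    (hG : DifferentiableOn ℂ G (annulus r)) {C : ℝ}
    (hbound : ∀ ε > 0, ∃ δ > 0, ∀ z ∈ annulus r,
      (1 - δ < ‖z‖ ∨ ‖z‖ < r + δ) → ‖G z‖ ≤ C + ε) :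
    ∀ z ∈ annulus r, ‖G z‖ ≤ C := by
  intro z hz
  obtain ⟨hz1, hz2⟩ := hz
  refine le_of_forall_pos_le_add fun ε hε => ?_
  obtain ⟨δ, hδpos, hδ⟩ := hbound ε hε
  set δ' : ℝ := min (min δ (‖z‖ - r)) (1 - ‖z‖) / 2 with hδ'
  have hδ'pos : 0 < δ' := by
    apply div_pos _ two_pos
    simp only [lt_min_iff]
    exact ⟨⟨hδpos, by linarith⟩, by linarith⟩
  have hδ'δ : δ' < δ := by
    have h1 : min (min δ (‖z‖ - r)) (1 - ‖z‖) ≤ δ :=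
      le_trans (min_le_left _ _) (min_le_left _ _)
    rw [hδ']; linarith
  have hδ'z1 : δ' < ‖z‖ - r := by
    have h1 : min (min δ (‖z‖ - r)) (1 - ‖z‖) ≤ ‖z‖ - r :=
      le_trans (min_le_left _ _) (min_le_right _ _)
    rw [hδ']; linarith
  have hδ'z2 : δ' < 1 - ‖z‖ := by
    have h1 : min (min δ (‖z‖ - r)) (1 - ‖z‖) ≤ 1 - ‖z‖ :=
      min_le_right _ _
    rw [hδ']; linarith
  have habs0 : 0 < ‖z‖ := lt_trans hr0 hz1
  set U : Set ℂ := Metric.ball 0 (1 - δ') ∩ (Metric.closedBall 0 (r + δ'))ᶜ with hU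
  have hzU : z ∈ U := by
    constructor
    · rw [mem_ball, Complex.dist_eq, sub_zero]
      linarith
    · rw [mem_compl_iff, mem_closedBall, Complex.dist_eq, sub_zero, not_le]
      linarith
  have hclosure : closure U ⊆ {w : ℂ | r + δ' ≤ ‖w‖ ∧ ‖w‖ ≤ 1 - δ'} := by
    intro w hw
    constructor
    · have : closure U ⊆ closure ((Metric.closedBall 0 (r + δ') : Set ℂ)ᶜ) :=
        closure_mono (inter_subset_right)
      have hw2 := this hw
      have : closure ((Metric.closedBall 0 (r + δ') : Set ℂ)ᶜ) ⊆
          {w : ℂ | r + δ' ≤ ‖w‖} := by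
        apply closure_minimal
        · intro x hx
          simp only [mem_compl_iff, mem_closedBall, Complex.dist_eq, sub_zero, not_le] at hx
          exact le_of_lt hx
        · exact isClosed_le continuous_const continuous_norm
      exact this hw2
    · have : closure U ⊆ closure (Metric.ball (0:ℂ) (1 - δ')) :=
        closure_mono (inter_subset_left)
      have hw2 := this hw
      have := closure_ball_subset_closedBall hw2
      rwa [mem_closedBall, Complex.dist_eq, sub_zero] at this
  have hclosure' : closure U ⊆ annulus r := fun w hw =>
    ⟨by linarith [(hclosure hw).1], by linarith [(hclosure hw).2]⟩
  have hdiff : DiffContOnCl ℂ G U := DifferentiableOn.diffContOnCl (hG.mono hclosure')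
  have hbd : Bornology.IsBounded U :=
    (isBounded_ball).subset inter_subset_left
  have hfr : ∀ w ∈ frontier U, ‖G w‖ ≤ C + ε := by
    intro w hw
    have hw' := frontier_inter_subset _ _ hw
    have hcases : ‖w‖ = 1 - δ' ∨ ‖w‖ = r + δ' := by
      rcases hw' with ⟨h1, -⟩ | ⟨-, h2⟩
      · left
        rw [frontier_ball (0:ℂ) (by linarith : (1:ℝ) - δ' ≠ 0)] at h1
        rw [mem_sphere_iff_norm, sub_zero] at h1
        exact h1
      · right
        rw [frontier_compl, frontier_closedBall (0:ℂ) (by positivity : r + δ' ≠ 0)] at h2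
        rw [mem_sphere_iff_norm, sub_zero] at h2
        exact h2
    rcases hcases with h | h
    · refine hδ w ⟨by rw [h]; linarith, by rw [h]; linarith⟩ (Or.inl ?_)
      rw [h]; linarith
    · refine hδ w ⟨by rw [h]; linarith, by rw [h]; linarith⟩ (Or.inr ?_)
      rw [h]; linarith
  have := Complex.norm_le_of_forall_mem_frontier_norm_le hbd hdiff hfr (subset_closure hzU)
  exact this

lemma log_identity {r₁ r₂ : ℝ} (h₀ : 0 < r₁) (hr₁ : r₁ < 1) (h₂ : 0 < r₂) (h₂1 : r₂ < 1)
    {f : ℂ → ℂ} (hf : DifferentiableOn ℂ f (annulus r₁))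
    (hfm : Set.MapsTo f (annulus r₁) (annulus r₂))
    (hNout : ∀ ε > 0, ∃ δ > 0, ∀ z ∈ annulus r₁,
      1 - δ < ‖z‖ → 1 - ε < ‖f z‖)
    (hNin : ∀ ε > 0, ∃ δ > 0, ∀ z ∈ annulus r₁,
      ‖z‖ < r₁ + δ → ‖f z‖ < r₂ + ε) :
    ∀ z ∈ annulus r₁, Real.log (‖f z‖) * Real.log r₁
      = Real.log (‖z‖) * Real.log r₂ := by
  have hfne : ∀ z ∈ annulus r₁, f z ≠ 0 := by
    intro z hz h0
    have := (hfm hz).1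
    rw [h0, norm_zero] at this
    linarith
  have hzne : ∀ z ∈ annulus r₁, z ≠ 0 := by
    intro z hz h0
    have h1 := hz.1
    rw [h0, norm_zero] at h1
    linarith
  -- upper bound
  have hup : ∀ p q : ℕ, 0 < p → 0 < q → ∀ z ∈ annulus r₁,
      (‖f z‖)^q / (‖z‖)^p ≤ max 1 (r₂^q / r₁^p) := by
    intro p q hp hq
    have hdiff : DifferentiableOn ℂ (fun w => (f w)^q / w^p) (annulus r₁) :=
      (hf.pow q).div ((differentiable_id.pow p).differentiableOn)
        (fun w hw => pow_ne_zero p (hzne w hw))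
    have hmain := absmax_annulus h₀ hdiff (C := max 1 (r₂^q / r₁^p)) ?_
    · intro z hz
      have := hmain z hz
      rwa [norm_div, norm_pow, norm_pow] at this
    · intro ε hε
      have hev : ∀ᶠ x : ℝ in nhds 0, (r₂ + x)^q / r₁^p < r₂^q/r₁^p + ε ∧
          (1 < (1+ε) * (1-x)^p ∧ 0 < 1 - x) := by
        have t1 : Tendsto (fun x : ℝ => (r₂ + x)^q / r₁^p) (nhds 0) (nhds (r₂^q/r₁^p)) := by
          have : Continuous (fun x : ℝ => (r₂ + x)^q / r₁^p) :=
            ((continuous_const.add continuous_id).pow q).div_const _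
          simpa using this.tendsto 0
        have t2 : Tendsto (fun x : ℝ => (1+ε) * (1-x)^p) (nhds 0) (nhds (1+ε)) := by
          have : Continuous (fun x : ℝ => (1+ε) * (1-x)^p) :=
            continuous_const.mul ((continuous_const.sub continuous_id).pow p)
          simpa using this.tendsto 0
        have t3 : Tendsto (fun x : ℝ => 1 - x) (nhds 0) (nhds 1) := by
          have : Continuous (fun x : ℝ => 1 - x) := continuous_const.sub continuous_id
          simpa using this.tendsto 0
        exact (t1.eventually_lt_const (by linarith)).and
          ((t2.eventually_const_lt (by linarith)).and (t3.eventually_const_lt (by linarith)))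
      obtain ⟨η, hη, hP⟩ := Metric.eventually_nhds_iff.mp hev
      set x₀ : ℝ := min (η/2) (1/2) with hx₀def
      have hx₀pos : 0 < x₀ := by
        apply lt_min (by linarith) (by norm_num)
      have hx₀ := hP (show dist x₀ 0 < η by
        rw [Real.dist_eq, sub_zero, abs_of_pos hx₀pos]
        calc x₀ ≤ η/2 := min_le_left _ _
        _ < η := by linarith)
      obtain ⟨h1, h2, h3⟩ := hx₀
      obtain ⟨δin, hδinpos, hδin⟩ := hNin x₀ hx₀pos
      refine ⟨min δin x₀, lt_min hδinpos hx₀pos, fun w hw hend => ?_⟩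
      have hw0 : (0:ℝ) < ‖w‖ := lt_trans h₀ hw.1
      have habsG : ‖(f w)^q / w^p‖ = (‖f w‖)^q / (‖w‖)^p := by
        rw [norm_div, norm_pow, norm_pow]
      rw [habsG]
      have hfw0 : (0:ℝ) ≤ ‖f w‖ := (norm_nonneg _)
      rcases hend with hout | hin
      · -- outer: |w| > 1 - min δin x₀ ≥ 1 - x₀
        have h1w : 1 - x₀ < ‖w‖ := by
          calc 1 - x₀ ≤ 1 - min δin x₀ := by linarith [min_le_right δin x₀]
          _ < ‖w‖ := hout
        have hnum : (‖f w‖)^q ≤ 1 := pow_le_one₀ hfw0 (le_of_lt (hfm hw).2)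
        have hden : (1 - x₀)^p ≤ (‖w‖)^p :=
          pow_le_pow_left₀ (by linarith) (le_of_lt h1w) p
        have hdenpos : (0:ℝ) < (1 - x₀)^p := by positivity
        have hle : (‖f w‖)^q / (‖w‖)^p ≤ 1 / (1-x₀)^p := by
          apply div_le_div₀ (by norm_num) hnum hdenpos hden
        have : (1:ℝ) / (1-x₀)^p < 1 + ε := by
          rw [div_lt_iff₀ hdenpos]
          linarith
        calc (‖f w‖)^q / (‖w‖)^p ≤ 1 / (1-x₀)^p := hle
        _ ≤ max 1 (r₂^q/r₁^p) + ε := by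
            have : (1:ℝ) ≤ max 1 (r₂^q/r₁^p) := le_max_left _ _
            linarith
      · -- inner
        have hwin : ‖w‖ < r₁ + δin := by
          calc ‖w‖ < r₁ + min δin x₀ := hin
          _ ≤ r₁ + δin := by linarith [min_le_left δin x₀]
        have hfw := hδin w hw hwin
        have hnum : (‖f w‖)^q ≤ (r₂ + x₀)^q :=
          pow_le_pow_left₀ hfw0 (le_of_lt hfw) q
        have hden : r₁^p ≤ (‖w‖)^p := pow_le_pow_left₀ (le_of_lt h₀) (le_of_lt hw.1) p
        have hle : (‖f w‖)^q / (‖w‖)^p ≤ (r₂ + x₀)^q / r₁^p := by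
          apply div_le_div₀ (by positivity) hnum (by positivity) hden
        calc (‖f w‖)^q / (‖w‖)^p ≤ (r₂ + x₀)^q / r₁^p := hle
        _ ≤ r₂^q/r₁^p + ε := le_of_lt h1
        _ ≤ max 1 (r₂^q/r₁^p) + ε := by
            have : r₂^q/r₁^p ≤ max 1 (r₂^q/r₁^p) := le_max_right _ _
            linarith
  -- lower bound
  have hlo : ∀ p q : ℕ, 0 < p → 0 < q → ∀ z ∈ annulus r₁,
      (‖z‖)^p / (‖f z‖)^q ≤ max 1 (r₁^p / r₂^q) := by
    intro p q hp hq
    have hdiff : DifferentiableOn ℂ (fun w => w^p / (f w)^q) (annulus r₁) :=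
      ((differentiable_id.pow p).differentiableOn).div (hf.pow q)
        (fun w hw => pow_ne_zero q (hfne w hw))
    have hmain := absmax_annulus h₀ hdiff (C := max 1 (r₁^p / r₂^q)) ?_
    · intro z hz
      have := hmain z hz
      rwa [norm_div, norm_pow, norm_pow] at this
    · intro ε hε
      have hev : ∀ᶠ x : ℝ in nhds 0, (r₁ + x)^p / r₂^q < r₁^p/r₂^q + ε ∧
          (1 < (1+ε) * (1-x)^q ∧ 0 < 1 - x) := by
        have t1 : Tendsto (fun x : ℝ => (r₁ + x)^p / r₂^q) (nhds 0) (nhds (r₁^p/r₂^q)) := by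
          have : Continuous (fun x : ℝ => (r₁ + x)^p / r₂^q) :=
            ((continuous_const.add continuous_id).pow p).div_const _
          simpa using this.tendsto 0
        have t2 : Tendsto (fun x : ℝ => (1+ε) * (1-x)^q) (nhds 0) (nhds (1+ε)) := by
          have : Continuous (fun x : ℝ => (1+ε) * (1-x)^q) :=
            continuous_const.mul ((continuous_const.sub continuous_id).pow q)
          simpa using this.tendsto 0
        have t3 : Tendsto (fun x : ℝ => 1 - x) (nhds 0) (nhds 1) := by
          have : Continuous (fun x : ℝ => 1 - x) := continuous_const.sub continuous_id
          simpa using this.tendsto 0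
        exact (t1.eventually_lt_const (by linarith)).and
          ((t2.eventually_const_lt (by linarith)).and (t3.eventually_const_lt (by linarith)))
      obtain ⟨η, hη, hP⟩ := Metric.eventually_nhds_iff.mp hev
      set x₀ : ℝ := min (η/2) (1/2) with hx₀def
      have hx₀pos : 0 < x₀ := lt_min (by linarith) (by norm_num)
      have hx₀ := hP (show dist x₀ 0 < η by
        rw [Real.dist_eq, sub_zero, abs_of_pos hx₀pos]
        calc x₀ ≤ η/2 := min_le_left _ _
        _ < η := by linarith)
      obtain ⟨h1, h2, h3⟩ := hx₀
      obtain ⟨δout, hδoutpos, hδout⟩ := hNout x₀ hx₀pos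
      refine ⟨min δout x₀, lt_min hδoutpos hx₀pos, fun w hw hend => ?_⟩
      have hw0 : (0:ℝ) < ‖w‖ := lt_trans h₀ hw.1
      have habsG : ‖w^p / (f w)^q‖ = (‖w‖)^p / (‖f w‖)^q := by
        rw [norm_div, norm_pow, norm_pow]
      rw [habsG]
      have hfw2 : r₂ < ‖f w‖ := (hfm hw).1
      rcases hend with hout | hin
      · -- outer: |f w| > 1 - x₀
        have hwout : 1 - δout < ‖w‖ := by
          calc 1 - δout ≤ 1 - min δout x₀ := by linarith [min_le_left δout x₀]
          _ < ‖w‖ := hout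
        have hfw := hδout w hw hwout
        have hnum : (‖w‖)^p ≤ 1 := pow_le_one₀ (le_of_lt hw0) (le_of_lt hw.2)
        have hden : (1 - x₀)^q ≤ (‖f w‖)^q :=
          pow_le_pow_left₀ (by linarith) (le_of_lt hfw) q
        have hdenpos : (0:ℝ) < (1 - x₀)^q := by positivity
        have hle : (‖w‖)^p / (‖f w‖)^q ≤ 1 / (1-x₀)^q :=
          div_le_div₀ (by norm_num) hnum hdenpos hden
        have : (1:ℝ) / (1-x₀)^q < 1 + ε := by
          rw [div_lt_iff₀ hdenpos]; linarith
        calc (‖w‖)^p / (‖f w‖)^q ≤ 1 / (1-x₀)^q := hle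
        _ ≤ max 1 (r₁^p/r₂^q) + ε := by
            have : (1:ℝ) ≤ max 1 (r₁^p/r₂^q) := le_max_left _ _
            linarith
      · -- inner: |w| < r₁ + x₀
        have hwin : ‖w‖ < r₁ + x₀ := by
          calc ‖w‖ < r₁ + min δout x₀ := hin
          _ ≤ r₁ + x₀ := by linarith [min_le_right δout x₀]
        have hnum : (‖w‖)^p ≤ (r₁ + x₀)^p :=
          pow_le_pow_left₀ (le_of_lt hw0) (le_of_lt hwin) p
        have hden : r₂^q ≤ (‖f w‖)^q := pow_le_pow_left₀ (le_of_lt h₂)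
          (le_of_lt hfw2) q
        have hle : (‖w‖)^p / (‖f w‖)^q ≤ (r₁ + x₀)^p / r₂^q :=
          div_le_div₀ (by positivity) hnum (by positivity) hden
        calc (‖w‖)^p / (‖f w‖)^q ≤ (r₁ + x₀)^p / r₂^q := hle
        _ ≤ r₁^p/r₂^q + ε := le_of_lt h1
        _ ≤ max 1 (r₁^p/r₂^q) + ε := by
            have : r₁^p/r₂^q ≤ max 1 (r₁^p/r₂^q) := le_max_right _ _
            linarith
  -- now the log manipulation
  intro z hz
  set a : ℝ := Real.log (‖f z‖) with ha
  set b : ℝ := Real.log (‖z‖) with hb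
  set A : ℝ := Real.log r₂ with hA
  set B : ℝ := Real.log r₁ with hB
  have hA0 : A < 0 := Real.log_neg h₂ h₂1
  have hB0 : B < 0 := Real.log_neg h₀ hr₁
  have haz : (0:ℝ) < ‖z‖ := lt_trans h₀ hz.1
  have hafz : (0:ℝ) < ‖f z‖ := lt_trans h₂ (hfm hz).1
  have hmaxlog : ∀ X : ℝ, 0 < X → Real.log (max 1 X) = max 0 (Real.log X) := by
    intro X hX
    rcases le_total X 1 with h | h
    · rw [max_eq_left h, Real.log_one, max_eq_left (Real.log_nonpos (le_of_lt hX) h)]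
    · rw [max_eq_right h, max_eq_right (Real.log_nonneg h)]
  have habs : ∀ p q : ℕ, 0 < p → 0 < q →
      |(q:ℝ)*a - (p:ℝ)*b| ≤ |(q:ℝ)*A - (p:ℝ)*B| := by
    intro p q hp hq
    have h1 := hup p q hp hq z hz
    have h2 := hlo p q hp hq z hz
    have hl1 : (q:ℝ)*a - (p:ℝ)*b ≤ max 0 ((q:ℝ)*A - (p:ℝ)*B) := by
      have hlog := Real.log_le_log (by positivity) h1
      rwa [Real.log_div (by positivity) (by positivity), Real.log_pow, Real.log_pow,
        hmaxlog _ (by positivity), Real.log_div (by positivity) (by positivity),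
        Real.log_pow, Real.log_pow] at hlog
    have hl2 : (p:ℝ)*b - (q:ℝ)*a ≤ max 0 ((p:ℝ)*B - (q:ℝ)*A) := by
      have hlog := Real.log_le_log (by positivity) h2
      rwa [Real.log_div (by positivity) (by positivity), Real.log_pow, Real.log_pow,
        hmaxlog _ (by positivity), Real.log_div (by positivity) (by positivity),
        Real.log_pow, Real.log_pow] at hlog
    rcases le_total 0 ((q:ℝ)*A - (p:ℝ)*B) with h | h
    · rw [max_eq_right h] at hl1
      rw [max_eq_left (by linarith)] at hl2
      rw [_root_.abs_of_nonneg h]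
      exact abs_le.mpr ⟨by linarith, hl1⟩
    · rw [max_eq_left (by linarith)] at hl1
      rw [max_eq_right (by linarith)] at hl2
      rw [_root_.abs_of_nonpos h]
      exact abs_le.mpr ⟨by linarith, by linarith⟩
  set c : ℝ := A / B with hc
  have hBne : B ≠ 0 := ne_of_lt hB0
  have hc0 : 0 < c := by
    rw [hc, ← neg_div_neg_eq]
    exact div_pos (by linarith) (by linarith)
  have hAcB : A = c * B := (div_mul_cancel₀ A hBne).symm
  have key2 : ∀ n : ℕ, 0 < n → (n:ℝ) * |a - c*b| ≤ 2*|b| + 2*|B| := by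
    intro n hn
    set p : ℕ := Nat.ceil (c * (n:ℝ)) + 1 with hpdef
    have hp : 0 < p := Nat.succ_pos _
    have hcn0 : (0:ℝ) ≤ c * n := by positivity
    have hcn1 : c * (n:ℝ) < (p:ℝ) := by
      have := Nat.le_ceil (c * (n:ℝ))
      push_cast [hpdef]
      linarith
    have hcn2 : (p:ℝ) ≤ c * (n:ℝ) + 2 := by
      have := Nat.ceil_lt_add_one hcn0
      push_cast [hpdef]
      linarith
    have hkey := habs p n hp hn
    have e2 : (n:ℝ)*A - (p:ℝ)*B = B * (c*(n:ℝ) - (p:ℝ)) := by rw [hAcB]; ring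
    have hrhs : |(n:ℝ)*A - (p:ℝ)*B| ≤ 2*|B| := by
      rw [e2, abs_mul]
      have : |c*(n:ℝ) - (p:ℝ)| ≤ 2 := abs_le.mpr ⟨by linarith, by linarith⟩
      nlinarith [abs_nonneg B]
    have e1 : (n:ℝ)*(a - c*b) = ((n:ℝ)*a - (p:ℝ)*b) - ((c*(n:ℝ) - (p:ℝ))*b) := by ring
    have hlhs : (n:ℝ) * |a - c*b| ≤ |(n:ℝ)*a - (p:ℝ)*b| + 2*|b| := by
      have h1 : |(n:ℝ)*(a - c*b)| ≤ |(n:ℝ)*a - (p:ℝ)*b| + |(c*(n:ℝ) - (p:ℝ))*b| := by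
        rw [e1]
        exact abs_sub _ _
      have h2 : |(c*(n:ℝ) - (p:ℝ))*b| ≤ 2*|b| := by
        rw [abs_mul]
        have : |c*(n:ℝ) - (p:ℝ)| ≤ 2 := abs_le.mpr ⟨by linarith, by linarith⟩
        nlinarith [abs_nonneg b]
      have h3 : |(n:ℝ)*(a - c*b)| = (n:ℝ) * |a - c*b| := by
        rw [abs_mul, Nat.abs_cast]
      linarith
    linarith
  have hacb : a = c * b := by
    by_contra hne
    have hpos : 0 < |a - c*b| := abs_pos.mpr (sub_ne_zero.mpr hne)
    obtain ⟨n, hn⟩ := exists_nat_gt ((2*|b| + 2*|B|) / |a - c*b|)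
    have hn0 : 0 < n := by
      have hnonneg : (0:ℝ) ≤ (2*|b| + 2*|B|) / |a - c*b| := by positivity
      exact_mod_cast Nat.cast_pos.mp (lt_of_le_of_lt hnonneg hn)
    have := key2 n hn0
    rw [div_lt_iff₀ hpos] at hn
    linarith
  rw [hacb, hc]
  field_simp

lemma polar_abs (t θ : ℝ) (ht : 0 ≤ t) :
    ‖(t:ℂ) * Complex.exp ((θ:ℝ) * Complex.I)‖ = t := by
  rw [norm_mul, Complex.norm_exp_ofReal_mul_I, Complex.norm_real, Real.norm_eq_abs, mul_one, _root_.abs_of_nonneg ht]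

lemma polar_im (t θ : ℝ) : (((t:ℂ)) * Complex.exp ((θ:ℝ) * Complex.I)).im = t * Real.sin θ := by
  rw [Complex.exp_mul_I]
  simp [Complex.mul_im, Complex.cos_ofReal_re, Complex.sin_ofReal_re]

lemma polar_log (t θ : ℝ) (ht : 0 < t) (hθ : θ ∈ Set.Ioc (-Real.pi) Real.pi) :
    Complex.log ((t:ℂ) * Complex.exp ((θ:ℝ) * Complex.I))
      = (Real.log t : ℂ) + (θ:ℝ) * Complex.I := by
  have harg : Complex.arg ((t:ℂ) * Complex.exp ((θ:ℝ) * Complex.I)) = θ := by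
    rw [Complex.exp_mul_I]
    exact Complex.arg_mul_cos_add_sin_mul_I ht hθ
  apply Complex.ext
  · rw [Complex.log_re, polar_abs t θ (le_of_lt ht)]
    simp [Complex.add_re, Complex.ofReal_re, Complex.mul_re, Complex.I_re, Complex.I_im]
  · rw [Complex.log_im, harg]
    simp

lemma eq_of_log_identity {r₁ r₂ : ℝ} (h₀ : 0 < r₁) (hr₁ : r₁ < 1) (h₂ : 0 < r₂) (h₂1 : r₂ < 1)
    (h₁₂ : r₁ ≤ r₂) {f : ℂ → ℂ} (hf : DifferentiableOn ℂ f (annulus r₁))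
    (hfm : Set.MapsTo f (annulus r₁) (annulus r₂))
    (hlog : ∀ z ∈ annulus r₁, Real.log (‖f z‖) * Real.log r₁
      = Real.log (‖z‖) * Real.log r₂) :
    r₁ = r₂ := by
  set A : ℝ := Real.log r₂ with hA
  set B : ℝ := Real.log r₁ with hB
  have hA0 : A < 0 := Real.log_neg h₂ h₂1
  have hB0 : B < 0 := Real.log_neg h₀ hr₁
  have hBne : B ≠ 0 := ne_of_lt hB0
  have hBA : B ≤ A := Real.log_le_log h₀ h₁₂
  set c : ℝ := A / B with hc
  have hcB : c * B = A := div_mul_cancel₀ A hBne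
  have hc0 : 0 < c := by
    rw [hc, ← neg_div_neg_eq]
    exact div_pos (by linarith) (by linarith)
  have hc1 : c ≤ 1 := by
    by_contra h
    push_neg at h
    have := mul_lt_mul_of_neg_left h hB0
    rw [mul_one] at this
    rw [mul_comm] at hcB
    linarith
  -- the slit annulus
  set U' : Set ℂ := {z : ℂ | (r₁ < ‖z‖ ∧ ‖z‖ < 1) ∧ z ∈ Complex.slitPlane}
    with hU'
  have hU'sub : U' ⊆ annulus r₁ := fun z hz => hz.1
  have hU'open : IsOpen U' := by
    have he : U' = ({z : ℂ | r₁ < ‖z‖} ∩ {z : ℂ | ‖z‖ < 1})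
        ∩ Complex.slitPlane := rfl
    rw [he]
    exact ((isOpen_lt continuous_const continuous_norm).inter
      (isOpen_lt continuous_norm continuous_const)).inter Complex.isOpen_slitPlane
  have hU'conn : IsConnected U' := isConnected_annular_slit (le_of_lt h₀) hr₁
  set F : ℂ → ℂ := fun z => f z * Complex.exp (-(c:ℂ) * Complex.log z) with hF
  have hFdiff : DifferentiableOn ℂ F U' := by
    apply DifferentiableOn.mul (hf.mono hU'sub)
    intro z hz
    exact (((Complex.differentiableAt_log hz.2).const_mul (-(c:ℂ))).cexp).differentiableWithinAt
  have habspos : ∀ z ∈ annulus r₁, 0 < ‖z‖ ∧ 0 < ‖f z‖ := by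
    intro z hz
    exact ⟨lt_trans h₀ hz.1, lt_trans h₂ (hfm hz).1⟩
  have hlogc : ∀ z ∈ annulus r₁,
      Real.log (‖f z‖) = c * Real.log (‖z‖) := by
    intro z hz
    have h1 := hlog z hz
    rw [hc, div_mul_eq_mul_div, eq_div_iff hBne]
    linarith
  have hFabs : ∀ z ∈ U', ‖F z‖ = 1 := by
    intro z hz
    obtain ⟨haz, hafz⟩ := habspos z (hU'sub hz)
    rw [hF]
    simp only
    rw [norm_mul, Complex.norm_exp]
    have hre : (-(c:ℂ) * Complex.log z).re = -c * Real.log (‖z‖) := by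
      have h1 : (-(c:ℂ) * Complex.log z).re = (-c) * (Complex.log z).re := by
        simp [Complex.mul_re]
      rw [h1, Complex.log_re]
    rw [hre]
    calc ‖f z‖ * Real.exp (-c * Real.log (‖z‖))
        = Real.exp (Real.log (‖f z‖))
          * Real.exp (-c * Real.log (‖z‖)) := by rw [Real.exp_log hafz]
      _ = Real.exp (c * Real.log (‖z‖) + (-c * Real.log (‖z‖))) := by
          rw [hlogc z (hU'sub hz), ← Real.exp_add]
      _ = 1 := by rw [neg_mul, add_neg_cancel, Real.exp_zero]
  have hanalytic : AnalyticOnNhd ℂ F U' := hFdiff.analyticOnNhd hU'open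
  rcases hanalytic.is_constant_or_isOpen hU'conn.isPreconnected with ⟨lam, hlam⟩ | hopenmap
  · -- constant case
    have hlamabs : ‖lam‖ = 1 := by
      set s₀ : ℝ := (r₁ + 1)/2 with hs₀
      have hmem : ((s₀:ℝ):ℂ) ∈ U' := by
        constructor
        · rw [Complex.norm_real, Real.norm_eq_abs, abs_of_pos (by rw [hs₀]; linarith)]
          exact ⟨by rw [hs₀]; linarith, by rw [hs₀]; linarith⟩
        · left
          rw [Complex.ofReal_re]
          rw [hs₀]; linarith
      rw [← hlam _ hmem]
      exact hFabs _ hmem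
    have hlamne : lam ≠ 0 := by
      intro h
      rw [h, norm_zero] at hlamabs
      norm_num at hlamabs
    have hfval : ∀ z ∈ U', f z = lam * Complex.exp ((c:ℂ) * Complex.log z) := by
      intro z hz
      have h1 := hlam z hz
      rw [hF] at h1
      simp only at h1
      have h2 : Complex.exp (-(c:ℂ) * Complex.log z) * Complex.exp ((c:ℂ) * Complex.log z)
          = 1 := by
        rw [← Complex.exp_add, neg_mul, neg_add_cancel, Complex.exp_zero]
      calc f z = f z * (Complex.exp (-(c:ℂ) * Complex.log z)
            * Complex.exp ((c:ℂ) * Complex.log z)) := by rw [h2, mul_one]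
        _ = (f z * Complex.exp (-(c:ℂ) * Complex.log z))
            * Complex.exp ((c:ℂ) * Complex.log z) := by ring
        _ = lam * Complex.exp ((c:ℂ) * Complex.log z) := by rw [h1]
    -- now the two sequences
    set s : ℝ := (r₁ + 1)/2 with hs
    have hs1 : r₁ < s := by rw [hs]; linarith
    have hs2 : s < 1 := by rw [hs]; linarith
    have hs0 : 0 < s := lt_trans h₀ hs1
    set z₀ : ℂ := ((-s : ℝ) : ℂ) with hz₀
    have hz₀U : z₀ ∈ annulus r₁ := by
      constructor <;> rw [hz₀, Complex.norm_real, Real.norm_eq_abs, abs_of_neg (by linarith)] <;> linarith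
    set θ : ℕ → ℝ := fun n => Real.pi - 1/(n+1) with hθdef
    have hpi : (3:ℝ) < Real.pi := Real.pi_gt_three
    have hθmem : ∀ n : ℕ, 0 < θ n ∧ θ n < Real.pi := by
      intro n
      have h1 : (0:ℝ) < 1/((n:ℝ)+1) := by positivity
      have h2 : 1/((n:ℝ)+1) ≤ 1 := by
        rw [div_le_one (by positivity)]
        linarith [Nat.cast_nonneg (α := ℝ) n]
      exact ⟨by rw [hθdef]; simp only; linarith, by rw [hθdef]; simp only; linarith⟩
    have hθtendsto : Tendsto θ atTop (nhds Real.pi) := by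
      have h1 : Tendsto (fun n : ℕ => 1/((n:ℝ)+1)) atTop (nhds 0) :=
        tendsto_one_div_add_atTop_nhds_zero_nat
      have h2 := (tendsto_const_nhds (x := Real.pi) (f := (atTop : Filter ℕ))).sub h1
      rw [sub_zero] at h2
      rw [hθdef]
      exact h2
    -- the two limit equations
    have key : ∀ σ : ℝ, (σ = 1 ∨ σ = -1) →
        f z₀ = lam * Complex.exp ((c:ℂ) * ((Real.log s : ℂ) + (σ * Real.pi : ℝ) * Complex.I)) := by
      intro σ hσ
      set zn : ℕ → ℂ := fun n => (s:ℂ) * Complex.exp ((σ * θ n : ℝ) * Complex.I) with hzn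
      have hznabs : ∀ n, ‖zn n‖ = s := fun n => polar_abs s _ (le_of_lt hs0)
      have hznU' : ∀ n, zn n ∈ U' := by
        intro n
        refine ⟨⟨by rw [hznabs n]; exact hs1, by rw [hznabs n]; exact hs2⟩, ?_⟩
        right
        rw [hzn]
        simp only
        rw [polar_im]
        have hsin : Real.sin (θ n) > 0 :=
          Real.sin_pos_of_pos_of_lt_pi (hθmem n).1 (hθmem n).2
        rcases hσ with rfl | rfl
        · simp only [one_mul]
          exact ne_of_gt (by positivity)
        · rw [show (-1 : ℝ) * θ n = -(θ n) by ring, Real.sin_neg]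
          exact ne_of_lt (by nlinarith)
      have hzlog : ∀ n, Complex.log (zn n) = (Real.log s : ℂ) + ((σ * θ n : ℝ)) * Complex.I := by
        intro n
        apply polar_log s _ hs0
        obtain ⟨hθ1, hθ2⟩ := hθmem n
        rcases hσ with rfl | rfl
        · constructor
          · simp only [one_mul]; linarith
          · simp only [one_mul]; linarith
        · constructor
          · simp only [neg_one_mul]; linarith
          · simp only [neg_one_mul]; linarith
      have hfzn : ∀ n, f (zn n) = lam * Complex.exp ((c:ℂ)
          * ((Real.log s : ℂ) + ((σ * θ n : ℝ)) * Complex.I)) := by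
        intro n
        rw [hfval (zn n) (hznU' n), hzlog n]
      -- limits
      have hzntendsto : Tendsto zn atTop (nhds z₀) := by
        have hcont : Continuous (fun x : ℝ => (s:ℂ) * Complex.exp ((σ * x : ℝ) * Complex.I)) := by
          apply continuous_const.mul
          apply Complex.continuous_exp.comp
          exact (Complex.continuous_ofReal.comp (continuous_const.mul continuous_id)).mul
            continuous_const
        have h2 : Tendsto (fun n => (s:ℂ) * Complex.exp ((σ * θ n : ℝ) * Complex.I)) atTop
            (nhds ((s:ℂ) * Complex.exp ((σ * Real.pi : ℝ) * Complex.I))) :=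
          (hcont.tendsto _).comp hθtendsto
        have h3 : (s:ℂ) * Complex.exp ((σ * Real.pi : ℝ) * Complex.I) = z₀ := by
          rcases hσ with rfl | rfl
          · rw [hz₀]
            push_cast
            rw [one_mul, Complex.exp_pi_mul_I]
            ring
          · rw [hz₀]
            push_cast
            rw [neg_one_mul, neg_mul, Complex.exp_neg, Complex.exp_pi_mul_I]
            norm_num
        rwa [h3] at h2
      have hL1 : Tendsto (fun n => f (zn n)) atTop (nhds (f z₀)) := by
        have hcw : ContinuousWithinAt f (annulus r₁) z₀ := hf.continuousOn z₀ hz₀U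
        apply hcw.tendsto.comp
        rw [tendsto_nhdsWithin_iff]
        exact ⟨hzntendsto, Filter.Eventually.of_forall (fun n => hU'sub (hznU' n))⟩
      have hL2 : Tendsto (fun n => lam * Complex.exp ((c:ℂ)
          * ((Real.log s : ℂ) + ((σ * θ n : ℝ)) * Complex.I))) atTop
          (nhds (lam * Complex.exp ((c:ℂ)
            * ((Real.log s : ℂ) + ((σ * Real.pi : ℝ)) * Complex.I)))) := by
        have hcont : Continuous (fun x : ℝ => lam * Complex.exp ((c:ℂ)
            * ((Real.log s : ℂ) + ((σ * x : ℝ)) * Complex.I))) := by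
          apply continuous_const.mul
          apply Complex.continuous_exp.comp
          apply continuous_const.mul
          apply continuous_const.add
          exact (Complex.continuous_ofReal.comp (continuous_const.mul continuous_id)).mul
            continuous_const
        exact (hcont.tendsto _).comp hθtendsto
      exact tendsto_nhds_unique (hL1.congr hfzn) hL2
    have E1 := key 1 (Or.inl rfl)
    have E2 := key (-1) (Or.inr rfl)
    have hexp : Complex.exp ((c:ℂ) * ((Real.log s : ℂ) + ((1 * Real.pi : ℝ)) * Complex.I))
        = Complex.exp ((c:ℂ) * ((Real.log s : ℂ) + ((-1 * Real.pi : ℝ)) * Complex.I)) :=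
      mul_left_cancel₀ hlamne (E1.symm.trans E2)
    obtain ⟨m, hm⟩ := Complex.exp_eq_exp_iff_exists_int.mp hexp
    have hπI : ((2:ℂ) * (Real.pi:ℂ) * Complex.I) ≠ 0 := by
      simp [Real.pi_ne_zero, Complex.I_ne_zero]
    have hcn : (c:ℂ) = (m:ℂ) := by
      apply mul_right_cancel₀ hπI
      push_cast at hm ⊢
      linear_combination hm
    have hcr : c = (m : ℝ) := by exact_mod_cast hcn
    have hmpos : (0:ℝ) < (m:ℝ) := by rw [← hcr]; exact hc0
    have hm1 : (1:ℝ) ≤ (m:ℝ) := by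
      have : (0:ℤ) < m := by exact_mod_cast hmpos
      exact_mod_cast this
    have hceq : c = 1 := le_antisymm hc1 (by rw [hcr]; exact hm1)
    have hAB : A = B := by rw [← hcB, hceq, one_mul]
    rw [← Real.exp_log h₀, ← Real.exp_log h₂, ← hA, ← hB, hAB]
  · -- open case: contradiction with |F| = 1
    exfalso
    obtain ⟨z₀, hz₀⟩ := hU'conn.nonempty
    have himg : IsOpen (F '' U') := hopenmap U' subset_rfl hU'open
    obtain ⟨ρ, hρpos, hball⟩ := Metric.isOpen_iff.mp himg (F z₀) ⟨z₀, hz₀, rfl⟩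
    set w : ℂ := ((1 + ρ/2 : ℝ) : ℂ) * F z₀ with hw
    have hwball : w ∈ Metric.ball (F z₀) ρ := by
      rw [mem_ball, Complex.dist_eq]
      have : w - F z₀ = ((ρ/2 : ℝ) : ℂ) * F z₀ := by
        rw [hw]; push_cast; ring
      rw [this, norm_mul, Complex.norm_real, Real.norm_eq_abs, hFabs z₀ hz₀, mul_one, abs_of_pos (by linarith)]
      linarith
    obtain ⟨z', hz', hFz'⟩ := hball hwball
    have h1 : ‖w‖ = 1 := by rw [← hFz']; exact hFabs z' hz'
    rw [hw, norm_mul, Complex.norm_real, Real.norm_eq_abs, hFabs z₀ hz₀, mul_one,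
      abs_of_pos (by linarith)] at h1
    linarith

lemma exists_normalized {r₁ r₂ : ℝ} (h₀ : 0 < r₁) (hr₁ : r₁ < 1) (h₂ : 0 < r₂) (h₂1 : r₂ < 1)
    (hconf : ConformalEquivOn (annulus r₁) (annulus r₂)) :
    ∃ f : ℂ → ℂ, DifferentiableOn ℂ f (annulus r₁) ∧
      Set.MapsTo f (annulus r₁) (annulus r₂) ∧
      (∀ ε > 0, ∃ δ > 0, ∀ z ∈ annulus r₁,
        1 - δ < ‖z‖ → 1 - ε < ‖f z‖) ∧
      (∀ ε > 0, ∃ δ > 0, ∀ z ∈ annulus r₁,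
        ‖z‖ < r₁ + δ → ‖f z‖ < r₂ + ε) := by
  obtain ⟨f, g, hf, hg, hfm, hgm, hinv⟩ := hconf
  have hinv1 : ∀ z ∈ annulus r₁, g (f z) = z := fun z hz => hinv.1 hz
  have hinv2 : ∀ w ∈ annulus r₂, f (g w) = w := fun w hw => hinv.2 hw
  have hpf := proper_aux hr₁ hg.continuousOn hgm hinv1
  have hpg := proper_aux h₂1 hf.continuousOn hfm hinv2
  set ε₀ : ℝ := (1 - r₂)/4 with hε₀def
  have hε₀pos : 0 < ε₀ := by rw [hε₀def]; linarith
  have hgap : r₂ + ε₀ ≤ 1 - ε₀ := by rw [hε₀def]; linarith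
  obtain ⟨δ₀, hδ₀pos, hδ₀⟩ := hpf ε₀ hε₀pos
  -- target sets
  set Wm : Set ℂ := {w : ℂ | ‖w‖ < r₂ + ε₀} with hWm
  set Wp : Set ℂ := {w : ℂ | 1 - ε₀ < ‖w‖} with hWp
  have hWmo : IsOpen Wm := isOpen_lt continuous_norm continuous_const
  have hWpo : IsOpen Wp := isOpen_lt continuous_const continuous_norm
  have hdisj : Disjoint Wm Wp := by
    rw [Set.disjoint_left]
    intro w hw hw'
    rw [hWm, Set.mem_setOf_eq] at hw
    rw [hWp, Set.mem_setOf_eq] at hw'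
    linarith
  -- outer end region
  set Eo : Set ℂ := {z : ℂ | max r₁ (1 - δ₀) < ‖z‖ ∧ ‖z‖ < 1} with hEo
  have hEoconn : IsConnected Eo :=
    isConnected_annular (le_trans (le_of_lt h₀) (le_max_left _ _))
      (max_lt hr₁ (by linarith))
  have hEosub : Eo ⊆ annulus r₁ := fun z hz =>
    ⟨lt_of_le_of_lt (le_max_left _ _) hz.1, hz.2⟩
  have hEomem : ∀ z ∈ annulus r₁, 1 - δ₀ < ‖z‖ → z ∈ Eo := by
    intro z hz h
    exact ⟨max_lt hz.1 h, hz.2⟩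
  -- inner end region
  set ρ : ℝ := min 1 (r₁ + δ₀) with hρdef
  have hρ : r₁ < ρ := lt_min hr₁ (by linarith)
  set Ei : Set ℂ := {z : ℂ | r₁ < ‖z‖ ∧ ‖z‖ < ρ} with hEi
  have hEiconn : IsConnected Ei := isConnected_annular (le_of_lt h₀) hρ
  have hEisub : Ei ⊆ annulus r₁ := fun z hz =>
    ⟨hz.1, lt_of_lt_of_le hz.2 (min_le_left _ _)⟩
  have hEimem : ∀ z ∈ annulus r₁, ‖z‖ < r₁ + δ₀ → z ∈ Ei := by
    intro z hz h
    exact ⟨hz.1, lt_min hz.2 h⟩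
  -- images are in the union
  have hEoim : f '' Eo ⊆ Wm ∪ Wp := by
    rintro - ⟨z, hz, rfl⟩
    have := hδ₀ z (hEosub hz) (Or.inl (lt_of_le_of_lt (le_max_right _ _) hz.1))
    rcases this with h | h
    · exact Or.inl h
    · exact Or.inr h
  have hEiim : f '' Ei ⊆ Wm ∪ Wp := by
    rintro - ⟨z, hz, rfl⟩
    have := hδ₀ z (hEisub hz)
      (Or.inr (lt_of_lt_of_le hz.2 (min_le_right _ _)))
    rcases this with h | h
    · exact Or.inl h
    · exact Or.inr h
  have houter := (hEoconn.isPreconnected.image f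
    (hf.continuousOn.mono hEosub)).subset_or_subset hWmo hWpo hdisj hEoim
  have hinner := (hEiconn.isPreconnected.image f
    (hf.continuousOn.mono hEisub)).subset_or_subset hWmo hWpo hdisj hEiim
  -- ends estimates (combined form)
  have hends : (∀ z ∈ annulus r₁, 1 - δ₀ < ‖z‖ → f z ∈ Wp) →
      (∀ z ∈ annulus r₁, ‖z‖ < r₁ + δ₀ → f z ∈ Wp) → False := by
    intro hOut hIn
    obtain ⟨δg, hδgpos, hδg⟩ := hpg δ₀ hδ₀pos
    set t : ℝ := (r₂ + min (r₂ + δg) (1 - ε₀))/2 with ht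
    have htlb : r₂ < min (r₂ + δg) (1 - ε₀) := lt_min (by linarith) (by linarith)
    have ht1 : r₂ < t := by rw [ht]; linarith
    have ht2 : t < min (r₂ + δg) (1 - ε₀) := by rw [ht]; linarith
    have htpos : 0 < t := lt_trans h₂ ht1
    have hwV : ((t:ℝ):ℂ) ∈ annulus r₂ := by
      constructor <;> rw [Complex.norm_real, Real.norm_eq_abs, _root_.abs_of_pos htpos]
      · exact ht1
      · calc t < min (r₂ + δg) (1 - ε₀) := ht2
          _ ≤ 1 - ε₀ := min_le_right _ _
          _ < 1 := by linarith
    have habst : ‖((t:ℝ):ℂ)‖ = t := by rw [Complex.norm_real, Real.norm_eq_abs, _root_.abs_of_pos htpos]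
    have hbranch := hδg _ hwV (Or.inr (by
      rw [habst]
      calc t < min (r₂ + δg) (1 - ε₀) := ht2
        _ ≤ r₂ + δg := min_le_left _ _))
    have hgU : g ((t:ℝ):ℂ) ∈ annulus r₁ := hgm hwV
    have hcontra : f (g ((t:ℝ):ℂ)) ∈ Wp := by
      rcases hbranch with h | h
      · exact hIn _ hgU h
      · exact hOut _ hgU h
    rw [hinv2 _ hwV] at hcontra
    rw [hWp, Set.mem_setOf_eq, habst] at hcontra
    have : t < 1 - ε₀ := lt_of_lt_of_le ht2 (min_le_right _ _)
    linarith
  have hends' : (∀ z ∈ annulus r₁, 1 - δ₀ < ‖z‖ → f z ∈ Wm) →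
      (∀ z ∈ annulus r₁, ‖z‖ < r₁ + δ₀ → f z ∈ Wm) → False := by
    intro hOut hIn
    obtain ⟨δg, hδgpos, hδg⟩ := hpg δ₀ hδ₀pos
    set t : ℝ := (max (1 - δg) (r₂ + ε₀) + 1)/2 with ht
    have htub : max (1 - δg) (r₂ + ε₀) < 1 := max_lt (by linarith) (by linarith)
    have ht1 : max (1 - δg) (r₂ + ε₀) < t := by rw [ht]; linarith
    have ht2 : t < 1 := by rw [ht]; linarith
    have htr : r₂ < t := by
      calc r₂ < r₂ + ε₀ := by linarith
        _ ≤ max (1 - δg) (r₂ + ε₀) := le_max_right _ _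
        _ < t := ht1
    have htpos : 0 < t := lt_trans h₂ htr
    have habst : ‖((t:ℝ):ℂ)‖ = t := by rw [Complex.norm_real, Real.norm_eq_abs, _root_.abs_of_pos htpos]
    have hwV : ((t:ℝ):ℂ) ∈ annulus r₂ := by
      constructor <;> rw [Complex.norm_real, Real.norm_eq_abs, _root_.abs_of_pos htpos]
      · exact htr
      · exact ht2
    have hbranch := hδg _ hwV (Or.inl (by
      rw [habst]
      calc 1 - δg ≤ max (1 - δg) (r₂ + ε₀) := le_max_left _ _
        _ < t := ht1))
    have hgU : g ((t:ℝ):ℂ) ∈ annulus r₁ := hgm hwV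
    have hcontra : f (g ((t:ℝ):ℂ)) ∈ Wm := by
      rcases hbranch with h | h
      · exact hIn _ hgU h
      · exact hOut _ hgU h
    rw [hinv2 _ hwV] at hcontra
    rw [hWm, Set.mem_setOf_eq, habst] at hcontra
    have : r₂ + ε₀ < t := lt_of_le_of_lt (le_max_right _ _) ht1
    linarith
  rcases houter with hWmO | hWpO
  · -- outer maps near inner circle; inner must map near outer circle
    have hOut : ∀ z ∈ annulus r₁, 1 - δ₀ < ‖z‖ → f z ∈ Wm :=
      fun z hz h => hWmO ⟨z, hEomem z hz h, rfl⟩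
    have hIn : ∀ z ∈ annulus r₁, ‖z‖ < r₁ + δ₀ → f z ∈ Wp := by
      rcases hinner with hWmI | hWpI
      · exact absurd (fun z hz h => hWmI ⟨z, hEimem z hz h, rfl⟩) (by
          intro hIn'
          exact hends' hOut hIn')
      · exact fun z hz h => hWpI ⟨z, hEimem z hz h, rfl⟩
    -- use flipped map z ↦ r₂ / f z
    have hfne : ∀ z ∈ annulus r₁, f z ≠ 0 := by
      intro z hz h0
      have := (hfm hz).1
      rw [h0, norm_zero] at this
      linarith
    refine ⟨fun z => (r₂:ℂ) / f z, ?_, ?_, ?_, ?_⟩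
    · exact (differentiableOn_const _).div hf hfne
    · intro z hz
      have h1 := (hfm hz).1
      have h2 := (hfm hz).2
      have hfz0 : (0:ℝ) < ‖f z‖ := lt_trans h₂ h1
      constructor
      · rw [norm_div, Complex.norm_real, Real.norm_eq_abs, _root_.abs_of_pos h₂]
        rw [lt_div_iff₀ hfz0]
        nlinarith
      · rw [norm_div, Complex.norm_real, Real.norm_eq_abs, _root_.abs_of_pos h₂]
        rw [div_lt_one hfz0]
        exact h1
    · -- Nout for flipped map
      intro ε hε
      set ε' : ℝ := min (ε * r₂) ε₀ with hε'def
      have hε'pos : 0 < ε' := lt_min (by positivity) hε₀pos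
      have hε'le : ε' ≤ ε * r₂ := min_le_left _ _
      have hε'le₀ : ε' ≤ ε₀ := min_le_right _ _
      obtain ⟨δ, hδpos, hδ⟩ := hpf ε' hε'pos
      refine ⟨min δ δ₀, lt_min hδpos hδ₀pos, fun z hz hzo => ?_⟩
      have hz1 : 1 - δ₀ < ‖z‖ := by
        calc 1 - δ₀ ≤ 1 - min δ δ₀ := by linarith [min_le_right δ δ₀]
          _ < ‖z‖ := hzo
      have hz2 : 1 - δ < ‖z‖ := by
        calc 1 - δ ≤ 1 - min δ δ₀ := by linarith [min_le_left δ δ₀]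
          _ < ‖z‖ := hzo
      have hWmmem := hOut z hz hz1
      rw [hWm, Set.mem_setOf_eq] at hWmmem
      have hbr := hδ z hz (Or.inl hz2)
      have hfz : ‖f z‖ < r₂ + ε' := by
        rcases hbr with h | h
        · exact h
        · exfalso
          have : r₂ + ε₀ ≤ 1 - ε' := by linarith
          linarith
      have hfz0 : (0:ℝ) < ‖f z‖ := lt_trans h₂ (hfm hz).1
      rw [norm_div, Complex.norm_real, Real.norm_eq_abs, _root_.abs_of_pos h₂]
      rw [lt_div_iff₀ hfz0]
      rcases le_or_gt 1 ε with h1 | h1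
      · nlinarith
      · nlinarith
    · -- Nin for flipped map
      intro ε hε
      set ε' : ℝ := min (min (ε/2) (1/2)) ε₀ with hε'def
      have hε'pos : 0 < ε' := lt_min (lt_min (by linarith) (by norm_num)) hε₀pos
      have hε'le₀ : ε' ≤ ε₀ := min_le_right _ _
      have hε'half : ε' ≤ 1/2 := le_trans (min_le_left _ _) (min_le_right _ _)
      have hε'eps : ε' ≤ ε/2 := le_trans (min_le_left _ _) (min_le_left _ _)
      have hkey : ε' * (r₂ + ε) ≤ ε := by
        rcases le_or_gt ε 1 with h1 | h1
        · nlinarith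
        · nlinarith
      obtain ⟨δ, hδpos, hδ⟩ := hpf ε' hε'pos
      refine ⟨min δ δ₀, lt_min hδpos hδ₀pos, fun z hz hzi => ?_⟩
      have hz1 : ‖z‖ < r₁ + δ₀ := by
        calc ‖z‖ < r₁ + min δ δ₀ := hzi
          _ ≤ r₁ + δ₀ := by linarith [min_le_right δ δ₀]
      have hz2 : ‖z‖ < r₁ + δ := by
        calc ‖z‖ < r₁ + min δ δ₀ := hzi
          _ ≤ r₁ + δ := by linarith [min_le_left δ δ₀]
      have hWpmem := hIn z hz hz1
      rw [hWp, Set.mem_setOf_eq] at hWpmem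
      have hbr := hδ z hz (Or.inr hz2)
      have hfz : 1 - ε' < ‖f z‖ := by
        rcases hbr with h | h
        · exfalso
          have : r₂ + ε' ≤ 1 - ε₀ := by linarith
          linarith
        · exact h
      have hfz0 : (0:ℝ) < ‖f z‖ := lt_trans h₂ (hfm hz).1
      rw [norm_div, Complex.norm_real, Real.norm_eq_abs, _root_.abs_of_pos h₂]
      rw [div_lt_iff₀ hfz0]
      nlinarith
  · -- outer maps near outer circle: f itself works
    have hOut : ∀ z ∈ annulus r₁, 1 - δ₀ < ‖z‖ → f z ∈ Wp :=
      fun z hz h => hWpO ⟨z, hEomem z hz h, rfl⟩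
    have hIn : ∀ z ∈ annulus r₁, ‖z‖ < r₁ + δ₀ → f z ∈ Wm := by
      rcases hinner with hWmI | hWpI
      · exact fun z hz h => hWmI ⟨z, hEimem z hz h, rfl⟩
      · exact absurd (fun z hz h => hWpI ⟨z, hEimem z hz h, rfl⟩) (by
          intro hIn'
          exact hends hOut hIn')
    refine ⟨f, hf, hfm, ?_, ?_⟩
    · intro ε hε
      set ε' : ℝ := min ε ε₀ with hε'def
      have hε'pos : 0 < ε' := lt_min hε hε₀pos
      obtain ⟨δ, hδpos, hδ⟩ := hpf ε' hε'pos
      refine ⟨min δ δ₀, lt_min hδpos hδ₀pos, fun z hz hzo => ?_⟩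
      have hz1 : 1 - δ₀ < ‖z‖ := by
        calc 1 - δ₀ ≤ 1 - min δ δ₀ := by linarith [min_le_right δ δ₀]
          _ < ‖z‖ := hzo
      have hz2 : 1 - δ < ‖z‖ := by
        calc 1 - δ ≤ 1 - min δ δ₀ := by linarith [min_le_left δ δ₀]
          _ < ‖z‖ := hzo
      have hWpmem := hOut z hz hz1
      rw [hWp, Set.mem_setOf_eq] at hWpmem
      have hbr := hδ z hz (Or.inl hz2)
      have hε'le₀ : ε' ≤ ε₀ := min_le_right _ _
      have hε'le : ε' ≤ ε := min_le_left _ _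
      rcases hbr with h | h
      · exfalso
        have : r₂ + ε' ≤ 1 - ε₀ := by linarith
        linarith
      · linarith
    · intro ε hε
      set ε' : ℝ := min ε ε₀ with hε'def
      have hε'pos : 0 < ε' := lt_min hε hε₀pos
      obtain ⟨δ, hδpos, hδ⟩ := hpf ε' hε'pos
      refine ⟨min δ δ₀, lt_min hδpos hδ₀pos, fun z hz hzi => ?_⟩
      have hz1 : ‖z‖ < r₁ + δ₀ := by
        calc ‖z‖ < r₁ + min δ δ₀ := hzi
          _ ≤ r₁ + δ₀ := by linarith [min_le_right δ δ₀]
      have hz2 : ‖z‖ < r₁ + δ := by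
        calc ‖z‖ < r₁ + min δ δ₀ := hzi
          _ ≤ r₁ + δ := by linarith [min_le_left δ δ₀]
      have hWmmem := hIn z hz hz1
      rw [hWm, Set.mem_setOf_eq] at hWmmem
      have hbr := hδ z hz (Or.inr hz2)
      have hε'le₀ : ε' ≤ ε₀ := min_le_right _ _
      have hε'le : ε' ≤ ε := min_le_left _ _
      rcases hbr with h | h
      · linarith
      · exfalso
        have : r₂ + ε₀ ≤ 1 - ε' := by linarith
        linarith

end AnnuliHelpers

/-- for `0 < r₁ ≤ r₂ < 1`, the annuli `A_{r₁}` and `A_{r₂}` are conformally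
equivalent if and only if `r₁ = r₂`. -/
theorem annuli_conformalEquiv_iff (r₁ r₂ : ℝ)
    (h₀ : 0 < r₁) (h₁₂ : r₁ ≤ r₂) (h₁ : r₂ < 1) :
    ConformalEquivOn (annulus r₁) (annulus r₂) ↔ r₁ = r₂ := by
  have hr₁1 : r₁ < 1 := lt_of_le_of_lt h₁₂ h₁
  have hr₂0 : 0 < r₂ := lt_of_lt_of_le h₀ h₁₂
  constructor
  · intro hconf
    obtain ⟨f, hf, hfm, hNout, hNin⟩ := exists_normalized h₀ hr₁1 hr₂0 h₁ hconf
    exact eq_of_log_identity h₀ hr₁1 hr₂0 h₁ h₁₂ hf hfm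
      (log_identity h₀ hr₁1 hr₂0 h₁ hf hfm hNout hNin)
  · intro h
    subst h
    exact ⟨id, id, differentiableOn_id, differentiableOn_id, Set.mapsTo_id _, Set.mapsTo_id _,
      fun z _ => rfl, fun z _ => rfl⟩
end

section
/- Let ρ : F₂ → Sₙ be a transitive monodromy representation, so c₁ + c₂ ≤ n + 1 where cᵢ is the number of cycles of ρ(gᵢ). (Equivalently: for a transitive permutation group action generated by two permutations σ₁, σ₂ on a set of n elements, the number of orbits of σ₁ plus the number of orbits of σ₂ is at most n + 1.) -/
/-- The number of cycles of a permutation `σ` of `Fin n`, i.e. the number of orbits of the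
subgroup generated by `σ` acting on `{1,…,n}` (fixed points count as cycles). -/
noncomputable def numCycles {n : ℕ} (σ : Equiv.Perm (Fin n)) : ℕ :=
  Nat.card (MulAction.orbitRel.Quotient (Subgroup.zpowers σ) (Fin n))

open Module

variable {n : ℕ}

def fixSub (σ : Equiv.Perm (Fin n)) : Submodule ℚ (Fin n → ℚ) where
  carrier := {f | ∀ i, f (σ i) = f i}
  add_mem' := by intro a b ha hb i; simp [ha i, hb i]
  zero_mem' := by intro i; rfl
  smul_mem' := by intro c f hf i; simp [hf i]

lemma fix_zpow (σ : Equiv.Perm (Fin n)) {f : Fin n → ℚ} (hf : ∀ i, f (σ i) = f i)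
    (k : ℤ) (i : Fin n) : f ((σ ^ k) i) = f i := by
  have hnat : ∀ (m : ℕ) (j : Fin n), f ((σ ^ m) j) = f j := by
    intro m
    induction m with
    | zero => intro j; simp
    | succ m ih =>
        intro j
        rw [pow_succ', Equiv.Perm.mul_apply, hf, ih j]
  induction k using Int.rec with
  | ofNat m => simpa using hnat m i
  | negSucc m =>
      have h := hnat (m + 1) ((σ ^ (m + 1))⁻¹ i)
      rw [← Equiv.Perm.mul_apply, mul_inv_cancel, Equiv.Perm.one_apply] at h
      rw [zpow_negSucc]
      exact h.symm

lemma mk_sigma (σ : Equiv.Perm (Fin n)) (i : Fin n) :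
    (Quotient.mk (MulAction.orbitRel (Subgroup.zpowers σ) (Fin n)) (σ i)) = Quotient.mk _ i := by
  apply Quotient.sound
  change σ i ∈ MulAction.orbit (Subgroup.zpowers σ) i
  exact MulAction.mem_orbit i (⟨σ, Subgroup.mem_zpowers σ⟩ : Subgroup.zpowers σ)

lemma numCycles_eq_finrank (σ : Equiv.Perm (Fin n)) :
    numCycles σ = finrank ℚ (fixSub σ) := by
  classical
  letI S := MulAction.orbitRel (Subgroup.zpowers σ) (Fin n)
  set Q := MulAction.orbitRel.Quotient (Subgroup.zpowers σ) (Fin n) with hQ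
  have hlift : ∀ (f : fixSub σ) (a b : Fin n), S.r a b → (f : Fin n → ℚ) a = (f : Fin n → ℚ) b := by
    intro f a b hab
    have hmem : a ∈ MulAction.orbit (Subgroup.zpowers σ) b := MulAction.orbitRel_apply.mp hab
    obtain ⟨⟨g, hg⟩, hgb⟩ := hmem
    obtain ⟨k, rfl⟩ := Subgroup.mem_zpowers_iff.mp hg
    have : (σ ^ k) b = a := hgb
    rw [← this]
    exact fix_zpow σ f.2 k b
  have e : (Q → ℚ) ≃ₗ[ℚ] fixSub σ :=
    { toFun := fun g => ⟨fun i => g (Quotient.mk S i), by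
        intro i
        exact congrArg g (mk_sigma σ i)⟩
      invFun := fun f => Quotient.lift (f : Fin n → ℚ) (hlift f)
      map_add' := by intro a b; rfl
      map_smul' := by intro c a; rfl
      left_inv := by
        intro g
        funext q
        induction q using Quotient.ind
        rfl
      right_inv := by
        intro f
        apply Subtype.ext
        rfl }
  haveI : Finite Q := Quotient.finite _
  haveI : Fintype Q := Fintype.ofFinite Q
  rw [numCycles, Nat.card_eq_fintype_card, ← Module.finrank_pi ℚ (ι := Q)]
  exact e.finrank_eq

/-- for a transitive monodromy representation `ρ : F₂ → Sₙ`, the number of cycles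
of `ρ(g₁)` plus the number of cycles of `ρ(g₂)` is at most `n + 1`. -/
theorem cycles_add_cycles_le_of_transitive (n : ℕ)
    (ρ : FreeGroup (Fin 2) →* Equiv.Perm (Fin n))
    (htrans : ∀ a b : Fin n, ∃ g : FreeGroup (Fin 2), ρ g a = b) :
    numCycles (ρ (FreeGroup.of 0)) + numCycles (ρ (FreeGroup.of 1)) ≤ n + 1 := by
  rcases Nat.eq_zero_or_pos n with hn | hn
  · subst hn
    have h0 : ∀ σ : Equiv.Perm (Fin 0), numCycles σ = 0 := by
      intro σ
      haveI : IsEmpty (MulAction.orbitRel.Quotient (Subgroup.zpowers σ) (Fin 0)) :=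
        ⟨fun q => Quotient.inductionOn q Fin.elim0⟩
      simp [numCycles, Nat.card_of_isEmpty]
    simp [h0]
  · set σ₁ := ρ (FreeGroup.of 0) with hσ₁
    set σ₂ := ρ (FreeGroup.of 1) with hσ₂
    have hinv : ∀ f : (fixSub σ₁ ⊓ fixSub σ₂ : Submodule ℚ (Fin n → ℚ)),
        ∀ g : FreeGroup (Fin 2), ∀ i, (f : Fin n → ℚ) (ρ g i) = (f : Fin n → ℚ) i := by
      rintro ⟨f, hf1, hf2⟩ g
      induction g using FreeGroup.induction_on with
      | C1 => intro i; simp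
      | of x =>
          intro i
          fin_cases x
          · exact hf1 i
          · exact hf2 i
      | inv_of x h =>
          intro i
          have h' : ∀ j, f ((ρ (FreeGroup.of x)) j) = f j := h
          have h2 := h' ((ρ (FreeGroup.of x))⁻¹ i)
          rw [← Equiv.Perm.mul_apply, mul_inv_cancel, Equiv.Perm.one_apply] at h2
          rw [map_inv]
          exact h2.symm
      | mul a b ha hb =>
          intro i
          rw [map_mul, Equiv.Perm.mul_apply, ha, hb]
    have hinf : finrank ℚ (fixSub σ₁ ⊓ fixSub σ₂ : Submodule ℚ (Fin n → ℚ)) ≤ 1 := by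
      set x0 : Fin n := ⟨0, hn⟩
      let L : (fixSub σ₁ ⊓ fixSub σ₂ : Submodule ℚ (Fin n → ℚ)) →ₗ[ℚ] ℚ :=
        (LinearMap.proj x0).comp (Submodule.subtype _)
      have hLinj : Function.Injective L := by
        rw [← LinearMap.ker_eq_bot, LinearMap.ker_eq_bot']
        intro f hfL
        have hval : (f : Fin n → ℚ) x0 = 0 := hfL
        apply Subtype.ext
        funext i
        obtain ⟨g, hg⟩ := htrans x0 i
        have := hinv f g x0
        rw [hg] at this
        simpa [this] using hval
      simpa using LinearMap.finrank_le_finrank_of_injective hLinj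
    have hsup : finrank ℚ (fixSub σ₁ ⊔ fixSub σ₂ : Submodule ℚ (Fin n → ℚ)) ≤ n := by
      have := Submodule.finrank_le (fixSub σ₁ ⊔ fixSub σ₂)
      simpa [Module.finrank_pi] using this
    calc numCycles σ₁ + numCycles σ₂
        = finrank ℚ (fixSub σ₁) + finrank ℚ (fixSub σ₂) := by
          rw [numCycles_eq_finrank, numCycles_eq_finrank]
      _ = finrank ℚ (fixSub σ₁ ⊔ fixSub σ₂ : Submodule ℚ (Fin n → ℚ))
            + finrank ℚ (fixSub σ₁ ⊓ fixSub σ₂ : Submodule ℚ (Fin n → ℚ)) :=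
          (Submodule.finrank_sup_add_finrank_inf_eq _ _).symm
      _ ≤ n + 1 := Nat.add_le_add hsup hinf
end

section
/- The theta constant to the fourth power θ₃⁴(0,τ) = (Σ_{n∈ℤ} q^{n²})⁴, q = e^{2πiτ}, satisfies the weight-2 modular transformation law under Γ₀(4): for all (a b; c d) ∈ Γ₀(4), θ₃⁴(0, (aτ+b)/(cτ+d)) = (cτ+d)² θ₃⁴(0, τ). -/
open Complex

/-- The theta constant `θ₃(0,τ) = Σ_{n ∈ ℤ} q^{n²}`, `q = e^{2πiτ}`. -/
noncomputable def theta3 (τ : ℂ) : ℂ :=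
  ∑' n : ℤ, Complex.exp (2 * Real.pi * Complex.I * τ * (n : ℂ) ^ 2)

open UpperHalfPlane ModularForm Matrix Matrix.SpecialLinearGroup

open scoped MatrixGroups ModularForm

section AnalyticLemmas

lemma theta3_eq_jacobiTheta (z : ℂ) : theta3 z = jacobiTheta (2 * z) :=
  tsum_congr fun n => congrArg Complex.exp (by ring)

lemma theta3_add_one (z : ℂ) : theta3 (1 + z) = theta3 z := by
  refine tsum_congr fun n => ?_
  calc Complex.exp (2 * Real.pi * Complex.I * (1 + z) * (n:ℂ)^2)
      = Complex.exp (2 * Real.pi * Complex.I * z * (n:ℂ)^2) *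
        Complex.exp (((n^2 : ℤ) : ℂ) * (2 * Real.pi * Complex.I)) := by
        rw [← Complex.exp_add]; exact congrArg Complex.exp (by push_cast; ring)
    _ = Complex.exp (2 * Real.pi * Complex.I * z * (n:ℂ)^2) := by
        rw [Complex.exp_int_mul_two_pi_mul_I, mul_one]

lemma cpow_half_pow_four (x : ℂ) : (x ^ (1/2 : ℂ)) ^ (4:ℕ) = x ^ (2:ℕ) := by
  rw [← Complex.cpow_nat_mul]
  norm_num

lemma theta3_V (z : ℂ) (hz : 0 < z.im) :
    theta3 (z / (4 * z + 1)) ^ 4 = (4 * z + 1) ^ 2 * theta3 z ^ 4 := by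
  have hz0 : z ≠ 0 := fun h => by simp [h] at hz
  have hw0 : (2 : ℂ) * z ≠ 0 := mul_ne_zero two_ne_zero hz0
  have hd0 : (4 : ℂ) * z + 1 ≠ 0 := by
    intro h
    have := congrArg Complex.im h
    simp at this
    nlinarith
  set w : ℂ := 2 * z with hw
  have hσim : 0 < ((2:ℂ) * z).im := by simp; positivity
  set σ : ℍ := UpperHalfPlane.mk (2 * z) hσim with hσ
  have hρim : 0 < (-1 / w - 2).im := by
    have h1 : 0 < ((-(σ:ℂ))⁻¹).im := σ.im_inv_neg_coe_pos
    have h2 : (-1 / w - 2).im = ((-(σ:ℂ))⁻¹).im := by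
      rw [show (-(σ:ℂ))⁻¹ = -1 / w by rw [hσ]; push_cast; field_simp; rw [hw]]
      simp
    rw [h2]; exact h1
  set ρ : ℍ := UpperHalfPlane.mk (-1 / w - 2) hρim with hρ
  have hSρ : ((ModularGroup.S • ρ : ℍ) : ℂ) = w / (2 * w + 1) := by
    rw [UpperHalfPlane.modular_S_smul, UpperHalfPlane.coe_mk, UpperHalfPlane.coe_mk]
    have h21 : (2:ℂ) * w + 1 ≠ 0 := by rw [hw]; intro h; exact hd0 (by linear_combination h)
    have hnum : -(-1 / w - 2) = (2 * w + 1) / w := by field_simp; ring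
    rw [hnum, inv_div]
  have hSσ : ((ModularGroup.S • σ : ℍ) : ℂ) = -1 / w := by
    rw [UpperHalfPlane.modular_S_smul, UpperHalfPlane.coe_mk, UpperHalfPlane.coe_mk]
    rw [hw]; field_simp
  have e1 := jacobiTheta_S_smul ρ
  have e2 := jacobiTheta_S_smul σ
  rw [hSρ] at e1
  rw [hSσ] at e2
  have e3 : jacobiTheta (ρ : ℂ) = jacobiTheta (-1 / w) := by
    rw [show (-1/w : ℂ) = 2 + ((ρ : ℂ)) by rw [hρ, UpperHalfPlane.coe_mk]; ring,
      jacobiTheta_two_add]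
  have h21 : (2:ℂ) * w + 1 ≠ 0 := by rw [hw]; intro h; exact hd0 (by linear_combination h)
  have key : jacobiTheta (w / (2 * w + 1)) ^ 4 = (2 * w + 1) ^ 2 * jacobiTheta w ^ 4 := by
    rw [e1, e3, e2]
    rw [mul_pow, mul_pow, cpow_half_pow_four, cpow_half_pow_four]
    rw [UpperHalfPlane.coe_mk, UpperHalfPlane.coe_mk]
    have : (-Complex.I * (-1 / w - 2)) ^ (2:ℕ) * ((-Complex.I * w) ^ (2:ℕ) * jacobiTheta w ^ 4)
        = ((-1 / w - 2) * w) ^ (2:ℕ) * (Complex.I^(2:ℕ) * Complex.I^(2:ℕ)) * jacobiTheta w ^ 4 := by ring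
    rw [this, Complex.I_sq]
    rw [show ((-1 / w - 2) * w) = -(2 * w + 1) by field_simp; ring]
    ring
  have harg : (2 : ℂ) * (z / (4 * z + 1)) = w / (2 * w + 1) := by
    rw [hw]; field_simp; ring
  rw [theta3_eq_jacobiTheta, harg, key, theta3_eq_jacobiTheta, ← hw]
  rw [show (2:ℂ) * w + 1 = 4 * z + 1 by rw [hw]; ring]

end AnalyticLemmas

section GroupTheory

/-- The subgroup of `SL(2,ℤ)` leaving a function slash-invariant of weight 2. -/
def Hgrp (F : ℍ → ℂ) : Subgroup SL(2, ℤ) where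
  carrier := {γ | F ∣[(2:ℤ)] γ = F}
  one_mem' := SlashAction.slash_one (2:ℤ) F
  mul_mem' := by
    intro a b ha hb
    simp only [Set.mem_setOf_eq] at *
    rw [SlashAction.slash_mul, ha, hb]
  inv_mem' := by
    intro a ha
    simp only [Set.mem_setOf_eq] at *
    conv_lhs => rw [← ha]
    rw [← SlashAction.slash_mul, mul_inv_cancel, SlashAction.slash_one]

/-- V = (1 0; 4 1) -/
def Vmat : SL(2, ℤ) := ⟨!![1, 0; 4, 1], by simp [Matrix.det_fin_two_of]⟩

lemma coe_V_zpow (m : ℤ) : ((Vmat ^ m : SL(2,ℤ)) : Matrix (Fin 2) (Fin 2) ℤ) = !![1, 0; 4*m, 1] := by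
  induction m using Int.induction_on with
  | zero => simp [Matrix.one_fin_two]
  | succ n ih =>
      rw [_root_.zpow_add_one, Matrix.SpecialLinearGroup.coe_mul, ih]
      simp [Vmat, Matrix.mul_fin_two]
      ring
  | pred n ih =>
      rw [_root_.zpow_sub_one, Matrix.SpecialLinearGroup.coe_mul, ih]
      have : ((Vmat⁻¹ : SL(2,ℤ)) : Matrix (Fin 2) (Fin 2) ℤ) = !![1, 0; -4, 1] := by
        rw [Matrix.SpecialLinearGroup.coe_inv]; simp [Vmat, Matrix.adjugate_fin_two, Matrix.adjugate_fin_two_of]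
      rw [this]
      simp [Matrix.mul_fin_two]
      ring

lemma balanced_pos (x c : ℤ) (hc : 0 < c) : ∃ n : ℤ, 2 * (x + n * c).natAbs ≤ c.natAbs := by
  have hc0 : c ≠ 0 := hc.ne'
  have h1 : x % c + c * (x / c) = x := Int.emod_add_mul_ediv x c
  have h2 : 0 ≤ x % c := Int.emod_nonneg x hc0
  have h3 : x % c < c := Int.emod_lt_of_pos x hc
  by_cases h : 2 * (x % c) ≤ c
  · refine ⟨-(x / c), ?_⟩
    have e : x + -(x / c) * c = x % c := by linear_combination -h1
    rw [e]
    omega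
  · refine ⟨-(x / c) - 1, ?_⟩
    have e : x + (-(x / c) - 1) * c = x % c - c := by linear_combination -h1
    rw [e]
    omega

lemma balanced (x c : ℤ) (hc : c ≠ 0) : ∃ n : ℤ, 2 * (x + n * c).natAbs ≤ c.natAbs := by
  rcases hc.lt_or_gt with h | h
  · obtain ⟨n, hn⟩ := balanced_pos x (-c) (by omega)
    refine ⟨-n, ?_⟩
    have e : x + -n * c = x + n * -c := by ring
    rw [e]
    omega
  · exact balanced_pos x c h

lemma descent (H : Subgroup SL(2, ℤ)) (hT : ModularGroup.T ∈ H) (hV : Vmat ∈ H)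
    (hneg : -1 ∈ H) : ∀ γ : SL(2, ℤ), (4:ℤ) ∣ γ 1 0 → γ ∈ H := by
  suffices key : ∀ N : ℕ, ∀ γ : SL(2, ℤ), (γ 1 0).natAbs = N → (4:ℤ) ∣ γ 1 0 → γ ∈ H by
    intro γ h4; exact key (γ 1 0).natAbs γ rfl h4
  intro N
  induction N using Nat.strong_induction_on with
  | _ N ih =>
    intro γ hN h4
    have hdet : γ 0 0 * γ 1 1 - γ 0 1 * γ 1 0 = 1 := by
      have := γ.2
      rwa [Matrix.det_fin_two] at this
    by_cases hc : γ 1 0 = 0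
    · -- c = 0 : γ = ± T^b
      rw [hc, mul_zero, sub_zero] at hdet
      rcases Int.eq_one_or_neg_one_of_mul_eq_one' hdet with ⟨ha, hd⟩ | ⟨ha, hd⟩
      · have hγ : γ = ModularGroup.T ^ (γ 0 1) := by
          apply Subtype.ext
          rw [ModularGroup.coe_T_zpow]
          ext i j
          fin_cases i <;> fin_cases j <;> simp [ha, hd, hc]
        rw [hγ]; exact H.zpow_mem hT _
      · have hγ : γ = -ModularGroup.T ^ (-(γ 0 1)) := by
          apply Subtype.ext
          have : ((-ModularGroup.T ^ (-(γ 0 1)) : SL(2,ℤ)) : Matrix (Fin 2) (Fin 2) ℤ)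
              = -(!![1, -(γ 0 1); 0, 1]) := by
            rw [← ModularGroup.coe_T_zpow]
            rfl
          rw [this]
          ext i j
          fin_cases i <;> fin_cases j <;> simp [ha, hd, hc]
        rw [hγ, ← neg_one_mul]
        exact H.mul_mem hneg (H.zpow_mem hT _)
    · -- descent step
      set a := γ 0 0 with hadef
      set b := γ 0 1 with hbdef
      set c := γ 1 0 with hcdef
      set d := γ 1 1 with hddef
      have h2c : (2:ℤ) ∣ c := dvd_trans ⟨2, rfl⟩ h4
      have hd_odd : ¬ (2:ℤ) ∣ d := by
        intro h2d
        have : (2:ℤ) ∣ a * d - b * c :=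
          dvd_sub (h2d.mul_left a) (h2c.mul_left b)
        rw [hdet] at this
        omega
      obtain ⟨n, hn⟩ := balanced d c hc
      set d1 := c * n + d with hd1def
      have hn' : 2 * d1.natAbs ≤ c.natAbs := by
        have : d + n * c = d1 := by rw [hd1def]; ring
        rwa [this] at hn
      have hd1_odd : ¬ (2:ℤ) ∣ d1 := by
        intro h
        apply hd_odd
        have : (2:ℤ) ∣ d1 - c * n := dvd_sub h (h2c.mul_right n)
        simpa [hd1def] using this
      have hd1_ne : (4 * d1 : ℤ) ≠ 0 := by
        intro h; apply hd1_odd; omega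
      obtain ⟨m, hm⟩ := balanced c (4 * d1) hd1_ne
      set A := γ * ModularGroup.T ^ n * Vmat ^ m with hAdef
      have hγeta : (γ : Matrix (Fin 2) (Fin 2) ℤ) = !![a, b; c, d] := Matrix.eta_fin_two _
      have hAcoe : (A : Matrix (Fin 2) (Fin 2) ℤ)
          = !![a + (a*n+b)*(4*m), a*n+b; c + (c*n+d)*(4*m), c*n+d] := by
        rw [hAdef, Matrix.SpecialLinearGroup.coe_mul, Matrix.SpecialLinearGroup.coe_mul, ModularGroup.coe_T_zpow, coe_V_zpow, hγeta,
          Matrix.mul_fin_two, Matrix.mul_fin_two]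
        ext i j
        fin_cases i <;> fin_cases j <;> simp <;> ring
      have hA10 : A 1 0 = c + 4 * m * d1 := by
        show (A : Matrix (Fin 2) (Fin 2) ℤ) 1 0 = _
        rw [hAcoe]
        simp [hd1def]
        ring
      have hA11 : A 1 1 = d1 := by
        show (A : Matrix (Fin 2) (Fin 2) ℤ) 1 1 = _
        rw [hAcoe]
        simp [hd1def]
      have hm' : 2 * (A 1 0).natAbs ≤ 4 * d1.natAbs := by
        have e : c + m * (4 * d1) = A 1 0 := by rw [hA10]; ring
        rw [e] at hm
        have : ((4:ℤ) * d1).natAbs = 4 * d1.natAbs := by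
          rw [Int.natAbs_mul]; rfl
        omega
      have h4A : (4:ℤ) ∣ A 1 0 := by
        rw [hA10]
        exact Dvd.dvd.add h4 ⟨m * d1, by ring⟩
      have hlt : (A 1 0).natAbs < N := by
        rw [← hN]
        have hcne : c.natAbs ≠ 0 := fun h => hc (Int.natAbs_eq_zero.mp h)
        omega
      have hA_mem : A ∈ H := ih _ hlt A rfl h4A
      have hγA : γ = A * (Vmat ^ m)⁻¹ * (ModularGroup.T ^ n)⁻¹ := by
        rw [hAdef]; group
      rw [hγA]
      exact H.mul_mem (H.mul_mem hA_mem (H.inv_mem (H.zpow_mem hV _)))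
        (H.inv_mem (H.zpow_mem hT _))

end GroupTheory

section Membership

noncomputable def Ftheta : ℍ → ℂ := fun z => theta3 (z : ℂ) ^ 4

lemma hT_mem : Ftheta ∣[(2:ℤ)] ModularGroup.T = Ftheta := by
  funext z
  rw [ModularForm.slash_action_eq'_iff]
  have h10 : (ModularGroup.T : Matrix (Fin 2) (Fin 2) ℤ) 1 0 = 0 := by
    rw [ModularGroup.coe_T]; simp
  have h11 : (ModularGroup.T : Matrix (Fin 2) (Fin 2) ℤ) 1 1 = 1 := by
    rw [ModularGroup.coe_T]; simp
  show Ftheta (ModularGroup.T • z)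
      = (((ModularGroup.T : Matrix (Fin 2) (Fin 2) ℤ) 1 0 : ℂ) * z
        + ((ModularGroup.T : Matrix (Fin 2) (Fin 2) ℤ) 1 1 : ℂ)) ^ (2:ℤ) * Ftheta z
  rw [h10, h11, UpperHalfPlane.modular_T_smul]
  simp only [Int.cast_zero, Int.cast_one, zero_mul, zero_add, _root_.one_zpow, one_mul]
  show theta3 (((1:ℝ) +ᵥ z : ℍ) : ℂ) ^ 4 = _
  rw [UpperHalfPlane.coe_vadd]
  norm_num [theta3_add_one]
  rfl

lemma hneg_mem : Ftheta ∣[(2:ℤ)] (-1 : SL(2, ℤ)) = Ftheta := by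
  funext z
  rw [ModularForm.slash_action_eq'_iff]
  have h10 : ((-1 : SL(2, ℤ)) : Matrix (Fin 2) (Fin 2) ℤ) 1 0 = 0 := by
    rw [Matrix.SpecialLinearGroup.coe_neg]; simp
  have h11 : ((-1 : SL(2, ℤ)) : Matrix (Fin 2) (Fin 2) ℤ) 1 1 = -1 := by
    rw [Matrix.SpecialLinearGroup.coe_neg]; simp
  show Ftheta ((-1 : SL(2, ℤ)) • z)
      = ((((-1 : SL(2, ℤ)) : Matrix (Fin 2) (Fin 2) ℤ) 1 0 : ℂ) * z
        + (((-1 : SL(2, ℤ)) : Matrix (Fin 2) (Fin 2) ℤ) 1 1 : ℂ)) ^ (2:ℤ) * Ftheta z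
  rw [h10, h11]
  have : ((-1 : SL(2, ℤ)) • z : ℍ) = ((1 : SL(2, ℤ)) • z : ℍ) := by
    rw [show (-1 : SL(2,ℤ)) = -(1 : SL(2,ℤ)) from rfl, ModularGroup.SL_neg_smul]
  rw [this, one_smul]
  norm_num

lemma hV_mem : Ftheta ∣[(2:ℤ)] Vmat = Ftheta := by
  funext z
  rw [ModularForm.slash_action_eq'_iff]
  have h10 : (Vmat : Matrix (Fin 2) (Fin 2) ℤ) 1 0 = 4 := by
    rw [Vmat]; simp
  have h11 : (Vmat : Matrix (Fin 2) (Fin 2) ℤ) 1 1 = 1 := by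
    rw [Vmat]; simp
  show Ftheta (Vmat • z)
      = (((Vmat : Matrix (Fin 2) (Fin 2) ℤ) 1 0 : ℂ) * z
        + ((Vmat : Matrix (Fin 2) (Fin 2) ℤ) 1 1 : ℂ)) ^ (2:ℤ) * Ftheta z
  rw [h10, h11]
  have hcoe : ((Vmat • z : ℍ) : ℂ) = (z : ℂ) / (4 * z + 1) := by
    rw [UpperHalfPlane.specialLinearGroup_apply]
    simp [Vmat, UpperHalfPlane.coe_mk]
  show theta3 ((Vmat • z : ℍ) : ℂ) ^ 4 = _
  rw [hcoe]
  have := theta3_V (z : ℂ) z.2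
  rw [this]
  push_cast
  rw [zpow_two]
  show _ = ((4:ℂ) * z + 1) * ((4:ℂ) * z + 1) * theta3 (z:ℂ) ^ 4
  ring

end Membership

/-- `θ₃⁴(0,τ)` satisfies the weight-2 modular transformation law under `Γ₀(4)`. -/
theorem theta3_pow_four_weight_two_Gamma0_four
    (γ : Matrix.SpecialLinearGroup (Fin 2) ℤ)
    (hγ : γ ∈ CongruenceSubgroup.Gamma0 4) (τ : UpperHalfPlane) :
    theta3 ((((γ : Matrix (Fin 2) (Fin 2) ℤ) 0 0 : ℂ) * (τ : ℂ) +
              ((γ : Matrix (Fin 2) (Fin 2) ℤ) 0 1 : ℂ)) /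
            (((γ : Matrix (Fin 2) (Fin 2) ℤ) 1 0 : ℂ) * (τ : ℂ) +
              ((γ : Matrix (Fin 2) (Fin 2) ℤ) 1 1 : ℂ))) ^ 4
      = (((γ : Matrix (Fin 2) (Fin 2) ℤ) 1 0 : ℂ) * (τ : ℂ) +
          ((γ : Matrix (Fin 2) (Fin 2) ℤ) 1 1 : ℂ)) ^ 2 * theta3 (τ : ℂ) ^ 4 := by
  have h4 : (4:ℤ) ∣ γ 1 0 := by
    have := CongruenceSubgroup.Gamma0_mem.mp hγ
    have h := (ZMod.intCast_zmod_eq_zero_iff_dvd (γ 1 0) 4).mp this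
    exact_mod_cast h
  have hmem : γ ∈ Hgrp Ftheta :=
    descent (Hgrp Ftheta) hT_mem hV_mem hneg_mem γ h4
  have hslash : Ftheta ∣[(2:ℤ)] γ = Ftheta := hmem
  have hz := (ModularForm.slash_action_eq'_iff 2 Ftheta γ τ).mp (congrFun hslash τ)
  have hcoe : ((γ • τ : ℍ) : ℂ)
      = (((γ : Matrix (Fin 2) (Fin 2) ℤ) 0 0 : ℂ) * (τ : ℂ) +
          ((γ : Matrix (Fin 2) (Fin 2) ℤ) 0 1 : ℂ)) /
        (((γ : Matrix (Fin 2) (Fin 2) ℤ) 1 0 : ℂ) * (τ : ℂ) +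
          ((γ : Matrix (Fin 2) (Fin 2) ℤ) 1 1 : ℂ)) := by
    rw [UpperHalfPlane.specialLinearGroup_apply]
    simp [UpperHalfPlane.coe_mk]
  show theta3 _ ^ 4 = _
  rw [← hcoe]
  show Ftheta (γ • τ) = _
  rw [hz]
  rw [zpow_two]
  show _ = _ * Ftheta τ
  ring
end
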